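/- Let X : [0,L] → ℝ^d be a piecewise continuously differentiable path and let B : ℝ^m → T^{≥1}(ℝ^d) be a linear map. Define the path Y : [0,L] → ℝ^m by Y_t^i := ⟨σ(X|_{[0,t]}), B(e_i)⟩ for i = 1,…,m. Then the signature of Y is a linear transformation of the signature of X: for every w ∈ T^{≥1}(ℝ^m), ⟨σ(Y), w⟩ = ⟨σ(X), Λ_B(w)⟩, where Λ_B is the unique extension of B to a Zinbiel homomorphism (T^{≥1}(ℝ^m), ≻) → (T^{≥1}(ℝ^d), ≻). -/

import Mathlib

noncomputable section

open MeasureTheory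

/-- Words in the alphabet `{1,…,d}`. -/
abbrev Word (d : ℕ) := List (Fin d)

/-- `T(ℝ^d)`: the real vector space with basis the words in `{1,…,d}`. -/
abbrev Tens (d : ℕ) := Word d →₀ ℝ

namespace SigPaper

variable {d m s : ℕ}

/-- The basis word `w` as an element of `T(ℝ^d)`. -/
def wordT (w : Word d) : Tens d := Finsupp.single w 1

/-- The shuffle product of two words. -/
def shuffleWord : Word d → Word d → Tens d
  | [], v => Finsupp.single v 1
  | u, [] => Finsupp.single u 1
  | a :: u, b :: v =>
      Finsupp.mapDomain (fun w => a :: w) (shuffleWord u (b :: v)) +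
      Finsupp.mapDomain (fun w => b :: w) (shuffleWord (a :: u) v)
  termination_by u v => u.length + v.length
  decreasing_by all_goals simp +arith

/-- The shuffle product `⧢` on `T(ℝ^d)`, the bilinear extension of the shuffle of words. -/
def shuffle (x y : Tens d) : Tens d :=
  x.sum fun u a => y.sum fun v b => (a * b) • shuffleWord u v

/-- The operator appending the letter `i` at the end of every word (`T_i^+`). -/
def appendLetter (i : Fin d) (x : Tens d) : Tens d :=
  Finsupp.mapDomain (fun w => w ++ [i]) x

/-- The right half-shuffle of two words: `w ≻ (v∘i) = (w ⧢ v)∘i` (zero if the right word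
is empty). -/
def halfShuffleWord (u v : Word d) : Tens d :=
  match v.getLast? with
  | none => 0
  | some i => appendLetter i (shuffleWord u v.dropLast)

/-- The right half-shuffle `≻`, extended bilinearly. -/
def halfShuffle (x y : Tens d) : Tens d :=
  x.sum fun u a => y.sum fun v b => (a * b) • halfShuffleWord u v

/-- The letter-appending operator `T_i^+`. -/
def Tplus (i : Fin d) : Tens d → Tens d := appendLetter i

/-- `T_i^-` on a word: removes the last letter if it equals `i`, otherwise `0`. -/
def TminusWord (i : Fin d) (w : Word d) : Tens d :=
  match w.getLast? with
  | none => 0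
  | some j => if j = i then Finsupp.single w.dropLast 1 else 0

/-- The letter-removing operator `T_i^-`. -/
def Tminus (i : Fin d) (x : Tens d) : Tens d := x.sum fun w a => a • TminusWord i w

/-- The single-letter word `i` in `T(ℝ^d)`. -/
def letterT (i : Fin d) : Tens d := Finsupp.single [i] 1

/-- Shuffle powers `x^{⧢ n}`. -/
def shufflePow (x : Tens d) : ℕ → Tens d
  | 0 => Finsupp.single [] 1
  | n + 1 => shuffle (shufflePow x n) x

/-- Shuffle product of a list of elements. -/
def shuffleList : List (Tens d) → Tens d
  | [] => Finsupp.single [] 1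
  | x :: xs => shuffle x (shuffleList xs)

/-- Image of the monomial `x^t` under `φ_d`: the shuffle product of its letters. -/
def phiMon (t : Fin d →₀ ℕ) : Tens d :=
  shuffleList ((List.finRange d).map fun i => shufflePow (letterT i) (t i))

/-- The embedding `φ_d : ℝ[x₁,…,x_d] → (T(ℝ^d), ⧢)` sending the monomial
`x_{i₁}⋯x_{i_l}` to `i₁ ⧢ ⋯ ⧢ i_l`. -/
def phi (f : MvPolynomial (Fin d) ℝ) : Tens d :=
  f.support.sum fun t => f.coeff t • phiMon t

/-- A polynomial map `p : ℝ^d → ℝ^m`, given by `m` polynomials in `d` variables. -/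
abbrev PolyMap (d m : ℕ) := Fin m → MvPolynomial (Fin d) ℝ

/-- `k_p^{ij} = φ_d(∂p_i/∂x_j) ∈ T(ℝ^d)`. -/
def kP (p : PolyMap d m) (i : Fin m) (j : Fin d) : Tens d :=
  phi (MvPolynomial.pderiv j (p i))

/-- Auxiliary: `M_p` on reversed words, so that `M_p(e) = e` and
`M_p(w∘i) = Σ_j (M_p(w) ⧢ k_p^{ij})∘j`. -/
def MpRev (p : PolyMap d m) : List (Fin m) → Tens d
  | [] => Finsupp.single [] 1
  | i :: w => ∑ j : Fin d, appendLetter j (shuffle (MpRev p w) (kP p i j))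

/-- `M_p` on a word. -/
def MpWord (p : PolyMap d m) (w : Word m) : Tens d := MpRev p w.reverse

/-- The linear map `M_p : T(ℝ^m) → T(ℝ^d)`. -/
def Mp (p : PolyMap d m) (x : Tens m) : Tens d := x.sum fun w a => a • MpWord p w

/-- `X : [0,L] → ℝ^d` is piecewise continuously differentiable: there is a partition
`0 = t₀ ≤ t₁ ≤ ⋯ ≤ t_n = L` such that `X` is `C¹` on each subinterval. -/
def PiecewiseC1 (X : ℝ → Fin d → ℝ) (L : ℝ) : Prop :=
  ∃ (n : ℕ) (t : Fin (n + 1) → ℝ), Monotone t ∧ t 0 = 0 ∧ t (Fin.last n) = L ∧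
    ∀ k : Fin n, ContDiffOn ℝ 1 X (Set.Icc (t k.castSucc) (t k.succ))

/-- Iterated-integral signature coefficients, on reversed words:
`⟨σ(X|_{[0,t]}), w∘i⟩ = ∫_0^t ⟨σ(X|_{[0,r]}), w⟩ Ẋ^i_r dr`. -/
def sigRev (X : ℝ → Fin d → ℝ) : List (Fin d) → ℝ → ℝ
  | [], _ => 1
  | i :: w, t => ∫ r in (0:ℝ)..t, sigRev X w r * deriv (fun u => X u i) r

/-- `⟨σ(X|_{[0,L]}), w⟩`, the signature coefficient of the word `w`. -/
def sigWord (X : ℝ → Fin d → ℝ) (L : ℝ) (w : Word d) : ℝ := sigRev X w.reverse L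

/-- The pairing `⟨σ(X|_{[0,L]}), x⟩` for `x ∈ T(ℝ^d)`. -/
def sigT (X : ℝ → Fin d → ℝ) (L : ℝ) (x : Tens d) : ℝ :=
  x.sum fun w a => a * sigWord X L w

/-- The transformed path `p(X) : t ↦ p(X(t))`. -/
def pPath (p : PolyMap d m) (X : ℝ → Fin d → ℝ) : ℝ → Fin m → ℝ :=
  fun t i => MvPolynomial.eval (X t) (p i)

/-- The translated polynomial map `p̃(y) = p(y + x₀) − p(x₀)`, satisfying `p̃(0) = 0`. -/
def ptilde (p : PolyMap d m) (x0 : Fin d → ℝ) : PolyMap d m := fun i =>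
  MvPolynomial.aeval (fun j => MvPolynomial.X j + MvPolynomial.C (x0 j)) (p i) -
    MvPolynomial.C (MvPolynomial.eval x0 (p i))

/-- The pairing `⟨exp_∘(L·𝟙), x⟩` for `x ∈ T(ℝ¹)`: the coefficient of the word of
length `n` in `exp_∘(L·𝟙)` is `Lⁿ/n!`. -/
def expPair (L : ℝ) (x : Tens 1) : ℝ :=
  x.sum fun w a => a * (L ^ w.length / (w.length.factorial : ℝ))

/-- The pairing `⟨σ(X) ∘ σ(Y), x⟩` of the concatenation product of two signatures with
`x ∈ T(ℝ^d)`: on a word `w` it is `Σ_{u∘v = w} ⟨σ(X), u⟩·⟨σ(Y), v⟩`. -/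
def concatPair (X Y : ℝ → Fin d → ℝ) (L : ℝ) (x : Tens d) : ℝ :=
  x.sum fun w a =>
    a * ∑ k ∈ Finset.range (w.length + 1), sigWord X L (w.take k) * sigWord Y L (w.drop k)



set_option linter.unnecessarySeqFocus false

section Lemmas
variable {X : ℝ → Fin d → ℝ} {L : ℝ}

lemma shuffleWord_nil_left (v : Word d) : shuffleWord [] v = Finsupp.single v 1 := by
  rw [shuffleWord]

lemma shuffleWord_nil_right (u : Word d) : shuffleWord u [] = Finsupp.single u 1 := by
  cases u <;> rw [shuffleWord] <;> simp

lemma shuffleWord_cons_cons (a b : Fin d) (u v : Word d) :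
    shuffleWord (a :: u) (b :: v) =
      Finsupp.mapDomain (fun w => a :: w) (shuffleWord u (b :: v)) +
      Finsupp.mapDomain (fun w => b :: w) (shuffleWord (a :: u) v) := by
  rw [shuffleWord]

lemma appendLetter_single (i : Fin d) (w : Word d) (c : ℝ) :
    appendLetter i (Finsupp.single w c) = Finsupp.single (w ++ [i]) c :=
  Finsupp.mapDomain_single

lemma appendLetter_add (i : Fin d) (x y : Tens d) :
    appendLetter i (x + y) = appendLetter i x + appendLetter i y :=
  Finsupp.mapDomain_add

lemma appendLetter_mapDomain_cons (i a : Fin d) (z : Tens d) :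
    appendLetter i (Finsupp.mapDomain (fun w => a :: w) z) =
      Finsupp.mapDomain (fun w => a :: w) (appendLetter i z) := by
  unfold appendLetter
  rw [← Finsupp.mapDomain_comp, ← Finsupp.mapDomain_comp]
  rfl

/-- Mirror recursion for the shuffle of words. -/
lemma shuffleWord_concat_concat :
    ∀ N (u v : Word d), u.length + v.length ≤ N → ∀ i j : Fin d,
    shuffleWord (u ++ [i]) (v ++ [j]) =
      appendLetter i (shuffleWord u (v ++ [j])) + appendLetter j (shuffleWord (u ++ [i]) v) := by
  intro N
  induction N with
  | zero =>
    rintro u v h i j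
    have hu : u = [] := by cases u <;> simp_all
    have hv : v = [] := by cases v <;> simp_all
    subst hu; subst hv
    simp only [List.nil_append, shuffleWord_cons_cons, shuffleWord_nil_left,
      shuffleWord_nil_right, appendLetter_single, Finsupp.mapDomain_single]
    simp [add_comm]
  | succ N ih =>
    rintro u v h i j
    match u, v with
    | [], [] =>
      simp only [List.nil_append, shuffleWord_cons_cons, shuffleWord_nil_left,
        shuffleWord_nil_right, appendLetter_single, Finsupp.mapDomain_single]
      simp [add_comm]
    | [], b :: v' =>
      have key := ih [] v' (by simp at h ⊢; omega) i j
      simp only [List.nil_append, List.cons_append] at key ⊢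
      rw [shuffleWord_cons_cons i b [] (v' ++ [j]),
        shuffleWord_cons_cons i b [] v',
        shuffleWord_nil_left, shuffleWord_nil_left, key, shuffleWord_nil_left]
      simp only [Finsupp.mapDomain_add, Finsupp.mapDomain_single, appendLetter_add,
        appendLetter_single, appendLetter_mapDomain_cons, List.cons_append, List.nil_append]
      abel
    | a :: u', [] =>
      have key := ih u' [] (by simp at h ⊢; omega) i j
      simp only [List.nil_append, List.cons_append] at key ⊢
      rw [shuffleWord_cons_cons a j (u' ++ [i]) [],
        shuffleWord_cons_cons a j u' [],
        shuffleWord_nil_right, shuffleWord_nil_right, key, shuffleWord_nil_right]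
      simp only [Finsupp.mapDomain_add, Finsupp.mapDomain_single, appendLetter_add,
        appendLetter_single, appendLetter_mapDomain_cons, List.cons_append, List.nil_append]
      abel
    | a :: u', b :: v' =>
      have k1 := ih u' (b :: v') (by simp at h ⊢; omega) i j
      have k2 := ih (a :: u') v' (by simp at h ⊢; omega) i j
      simp only [List.nil_append, List.cons_append] at k1 k2 ⊢
      rw [shuffleWord_cons_cons a b (u' ++ [i]) (v' ++ [j]), k1, k2,
        shuffleWord_cons_cons a b u' (v' ++ [j]),
        shuffleWord_cons_cons a b (u' ++ [i]) v']
      simp only [Finsupp.mapDomain_add, appendLetter_add, appendLetter_mapDomain_cons]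
      abel


lemma halfShuffleWord_concat (u v : Word d) (j : Fin d) :
    halfShuffleWord u (v ++ [j]) = appendLetter j (shuffleWord u v) := by
  unfold halfShuffleWord
  simp

lemma sigRev_zero (X : ℝ → Fin d → ℝ) (w : List (Fin d)) :
    sigRev X w 0 = if w = [] then 1 else 0 := by
  cases w with
  | nil => simp [sigRev]
  | cons i u => simp [sigRev]

lemma sigWord_concat (X : ℝ → Fin d → ℝ) (s : ℝ) (w : Word d) (j : Fin d) :
    sigWord X s (w ++ [j]) = sigRev X (j :: w.reverse) s := by
  unfold sigWord
  simp

lemma sigT_zero_time (X : ℝ → Fin d → ℝ) (x : Tens d) : sigT X 0 x = x [] := by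
  unfold sigT
  rw [Finsupp.sum]
  have : ∀ w ∈ x.support, x w * sigWord X 0 w = if w = [] then x w else 0 := by
    intro w _
    unfold sigWord
    rw [sigRev_zero]
    simp only [List.reverse_eq_nil_iff]
    split <;> simp
  rw [Finset.sum_congr rfl this, Finset.sum_ite_eq' x.support ([] : Word d) (fun w => x w)]
  split <;> simp_all [Finsupp.mem_support_iff]

/-- `sigT X s` as a linear map. -/
def sigL (X : ℝ → Fin d → ℝ) (s : ℝ) : Tens d →ₗ[ℝ] ℝ where
  toFun := sigT X s
  map_add' x y := Finsupp.sum_add_index' (by intro a; simp) (by intro a b c; ring)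
  map_smul' c x := by
    show ((c • x).sum fun w a => a * sigWord X s w) = c • x.sum fun w a => a * sigWord X s w
    rw [Finsupp.sum_smul_index (fun a => by simp), smul_eq_mul, Finsupp.sum, Finsupp.sum,
      Finset.mul_sum]
    exact Finset.sum_congr rfl fun w _ => by ring

lemma sigT_eq_sigL (x : Tens d) : sigT X L x = sigL X L x := rfl

lemma sigT_single (s : ℝ) (w : Word d) (c : ℝ) :
    sigT X s (Finsupp.single w c) = c * sigWord X s w := by
  unfold sigT
  rw [Finsupp.sum_single_index]
  simp

lemma sigT_appendLetter (s : ℝ) (j : Fin d) (z : Tens d) :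
    sigT X s (appendLetter j z) = z.sum fun w a => a * sigRev X (j :: w.reverse) s := by
  unfold sigT appendLetter
  rw [Finsupp.sum_mapDomain_index (by intro b; simp) (by intro b m₁ m₂; ring)]
  exact Finsupp.sum_congr fun w _ => by rw [sigWord_concat]

lemma appendLetter_apply_nil (j : Fin d) (z : Tens d) : appendLetter j z [] = 0 := by
  unfold appendLetter
  exact Finsupp.mapDomain_notin_range _ _ (by simp)

lemma halfShuffleWord_apply_nil (u v : Word d) : halfShuffleWord u v [] = 0 := by
  unfold halfShuffleWord
  cases h : v.getLast? with
  | none => simp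
  | some i => simp [appendLetter_apply_nil]

lemma halfShuffle_apply_nil (x y : Tens d) : halfShuffle x y [] = 0 := by
  unfold halfShuffle
  rw [Finsupp.sum_apply]
  refine Finset.sum_eq_zero fun u _ => ?_
  simp only [Finsupp.sum_apply]
  refine Finset.sum_eq_zero fun v _ => ?_
  simp [halfShuffleWord_apply_nil]

lemma wordT_single (w : Word m) : wordT w = Finsupp.single w 1 := rfl

lemma halfShuffle_single_single (u v : Word d) :
    halfShuffle (Finsupp.single u 1) (Finsupp.single v 1) = halfShuffleWord u v := by
  unfold halfShuffle
  rw [Finsupp.sum_single_index (by simp), Finsupp.sum_single_index (by simp)]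
  simp

end Lemmas


section Analysis

open Set intervalIntegral

/-- Partition data witnessing that `X` is piecewise `C¹` on `[0, L]`. -/
structure PC (X : ℝ → Fin d → ℝ) (L : ℝ) : Type where
  n : ℕ
  t : Fin (n + 1) → ℝ
  mono : Monotone t
  t0 : t 0 = 0
  tL : t (Fin.last n) = L
  c1 : ∀ k : Fin n, ContDiffOn ℝ 1 X (Set.Icc (t k.castSucc) (t k.succ))

variable {X : ℝ → Fin d → ℝ} {L : ℝ}

lemma PC.t_nonneg (P : PC X L) (k : Fin (P.n + 1)) : 0 ≤ P.t k := by
  have := P.mono (Fin.zero_le k); rwa [P.t0] at this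

lemma PC.t_le (P : PC X L) (k : Fin (P.n + 1)) : P.t k ≤ L := by
  have := P.mono (Fin.le_last k); rwa [P.tL] at this

lemma PC.L_nonneg (P : PC X L) : 0 ≤ L := le_trans (P.t_nonneg (Fin.last P.n)) (le_of_eq P.tL)

lemma PC.piece_subset (P : PC X L) (k : Fin P.n) :
    Set.Icc (P.t k.castSucc) (P.t k.succ) ⊆ Set.Icc 0 L :=
  Set.Icc_subset_Icc (P.t_nonneg _) (P.t_le _)

/-- `g` is piecewise continuous w.r.t. the partition `P`. -/
def PW (P : PC X L) (g : ℝ → ℝ) : Prop :=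
  ∀ k : Fin P.n, ∃ gc : ℝ → ℝ,
    ContinuousOn gc (Set.Icc (P.t k.castSucc) (P.t k.succ)) ∧
    Set.EqOn g gc (Set.Ioo (P.t k.castSucc) (P.t k.succ))

lemma PW.of_continuousOn {P : PC X L} {g : ℝ → ℝ} (hg : ContinuousOn g (Set.Icc 0 L)) :
    PW P g :=
  fun k => ⟨g, hg.mono (P.piece_subset k), fun _ _ => rfl⟩

lemma PW.mul {P : PC X L} {g h : ℝ → ℝ} (hg : PW P g) (hh : PW P h) :
    PW P (fun x => g x * h x) := by
  intro k
  obtain ⟨gc, hgc, hge⟩ := hg k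
  obtain ⟨hc, hhc, hhe⟩ := hh k
  exact ⟨fun x => gc x * hc x, hgc.mul hhc, fun x hx => by simp [hge hx, hhe hx]⟩

lemma PW.const_mul {P : PC X L} {g : ℝ → ℝ} (hg : PW P g) (c : ℝ) :
    PW P (fun x => c * g x) := by
  intro k
  obtain ⟨gc, hgc, hge⟩ := hg k
  exact ⟨fun x => c * gc x, continuousOn_const.mul hgc, fun x hx => by simp [hge hx]⟩

lemma PW.finset_sum {P : PC X L} {ι : Type*} (s : Finset ι) (f : ι → ℝ → ℝ)
    (hf : ∀ i ∈ s, PW P (f i)) : PW P (fun x => ∑ i ∈ s, f i x) := by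
  intro k
  classical
  choose gc hgc hge using fun i (hi : i ∈ s) => hf i hi k
  refine ⟨fun x => ∑ i ∈ s.attach, gc i.1 i.2 x, ?_, ?_⟩
  · exact continuousOn_finset_sum _ fun i _ => hgc i.1 i.2
  · intro x hx
    show (∑ i ∈ s, f i x) = ∑ i ∈ s.attach, gc i.1 i.2 x
    rw [← Finset.sum_attach s (fun i => f i x)]
    exact Finset.sum_congr rfl fun i _ => hge i.1 i.2 hx

lemma PW.congr {P : PC X L} {g g' : ℝ → ℝ} (hg : PW P g)
    (h : ∀ k : Fin P.n, Set.EqOn g' g (Set.Ioo (P.t k.castSucc) (P.t k.succ))) : PW P g' := by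
  intro k
  obtain ⟨gc, hgc, hge⟩ := hg k
  exact ⟨gc, hgc, fun x hx => (h k hx).trans (hge hx)⟩

lemma PW.continuousAt {P : PC X L} {g : ℝ → ℝ} (hg : PW P g) {k : Fin P.n} {x : ℝ}
    (hx : x ∈ Set.Ioo (P.t k.castSucc) (P.t k.succ)) : ContinuousAt g x := by
  obtain ⟨gc, hgc, hge⟩ := hg k
  have hnb : Set.Ioo (P.t k.castSucc) (P.t k.succ) ∈ nhds x := isOpen_Ioo.mem_nhds hx
  have h1 : ContinuousAt gc x :=
    hgc.continuousAt (Filter.mem_of_superset hnb Set.Ioo_subset_Icc_self)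
  exact h1.congr (Filter.eventuallyEq_of_mem hnb fun y hy => (hge hy).symm)

lemma PW.continuousOn_Ioo {P : PC X L} {g : ℝ → ℝ} (hg : PW P g) (k : Fin P.n) :
    ContinuousOn g (Set.Ioo (P.t k.castSucc) (P.t k.succ)) := by
  obtain ⟨gc, hgc, hge⟩ := hg k
  exact (hgc.mono Set.Ioo_subset_Icc_self).congr hge

lemma PW.integrableOn_piece {P : PC X L} {g : ℝ → ℝ} (hg : PW P g) (k : Fin P.n) :
    IntegrableOn g (Set.Icc (P.t k.castSucc) (P.t k.succ)) := by
  obtain ⟨gc, hgc, hge⟩ := hg k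
  rw [integrableOn_Icc_iff_integrableOn_Ioo]
  have : IntegrableOn gc (Set.Ioo (P.t k.castSucc) (P.t k.succ)) :=
    (hgc.integrableOn_Icc).mono_set Set.Ioo_subset_Icc_self
  exact this.congr_fun (fun x hx => (hge hx).symm) measurableSet_Ioo

lemma PW.integrableOn {P : PC X L} {g : ℝ → ℝ} (hg : PW P g) :
    IntegrableOn g (Set.Icc 0 L) := by
  have key : ∀ k : Fin (P.n + 1), IntegrableOn g (Set.Icc 0 (P.t k)) := by
    intro k
    induction k using Fin.induction with
    | zero =>
      rw [P.t0, Set.Icc_self]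
      have : (volume : Measure ℝ).restrict {(0:ℝ)} = 0 := by
        rw [Measure.restrict_eq_zero]; simp
      rw [IntegrableOn, this]
      exact integrable_zero_measure
    | succ k ih =>
      exact ((ih.union (hg.integrableOn_piece k)).mono_set
        (Set.Icc_subset_Icc_union_Icc (b := P.t k.castSucc)))
  have := key (Fin.last P.n)
  rwa [P.tL] at this

lemma PW.intervalIntegrable {P : PC X L} {g : ℝ → ℝ} (hg : PW P g) {s : ℝ}
    (hs : s ∈ Set.Icc 0 L) : IntervalIntegrable g volume 0 s := by
  refine (hg.integrableOn.mono_set ?_).intervalIntegrable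
  rw [Set.uIcc_of_le hs.1]
  exact Set.Icc_subset_Icc le_rfl hs.2

lemma PW.continuousOn_primitive {P : PC X L} {g : ℝ → ℝ} (hg : PW P g) :
    ContinuousOn (fun s => ∫ r in (0:ℝ)..s, g r) (Set.Icc 0 L) := by
  have := intervalIntegral.continuousOn_primitive_interval (a := 0) (b := L)
    (f := g) (μ := volume) (by rw [Set.uIcc_of_le P.L_nonneg]; exact hg.integrableOn)
  rwa [Set.uIcc_of_le P.L_nonneg] at this

lemma PW.hasDerivAt_primitive {P : PC X L} {g : ℝ → ℝ} (hg : PW P g) {k : Fin P.n} {x : ℝ}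
    (hx : x ∈ Set.Ioo (P.t k.castSucc) (P.t k.succ)) :
    HasDerivAt (fun s => ∫ r in (0:ℝ)..s, g r) (g x) x := by
  have hxm : x ∈ Set.Icc 0 L :=
    P.piece_subset k ⟨le_of_lt hx.1, le_of_lt hx.2⟩
  exact intervalIntegral.integral_hasDerivAt_right (hg.intervalIntegrable hxm)
    ((hg.continuousOn_Ioo k).stronglyMeasurableAtFilter isOpen_Ioo x hx)
    (hg.continuousAt hx)

/-- Gluing: a continuous function on `[0, L]` vanishing at `0` with zero derivative on the
interior of each piece vanishes identically. -/
lemma PC.eq_zero_of_deriv_zero (P : PC X L) {F : ℝ → ℝ}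
    (hF : ContinuousOn F (Set.Icc 0 L)) (h0 : F 0 = 0)
    (hd : ∀ k : Fin P.n, ∀ x ∈ Set.Ioo (P.t k.castSucc) (P.t k.succ), HasDerivAt F 0 x) :
    ∀ s ∈ Set.Icc 0 L, F s = 0 := by
  have key : ∀ k : Fin (P.n + 1), ∀ s ∈ Set.Icc 0 (P.t k), F s = 0 := by
    intro k
    induction k using Fin.induction with
    | zero =>
      intro s hs
      rw [P.t0] at hs
      rw [Set.Icc_self] at hs
      rw [Set.mem_singleton_iff] at hs
      rw [hs, h0]
    | succ k ih =>
      intro s hs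
      by_cases hle : s ≤ P.t k.castSucc
      · exact ih s ⟨hs.1, hle⟩
      · push_neg at hle
        have hs2 : s ≤ L := le_trans hs.2 (P.t_le k.succ)
        have hsub : Set.Icc (P.t k.castSucc) s ⊆ Set.Icc 0 L :=
          Set.Icc_subset_Icc (P.t_nonneg _) hs2
        have hint := intervalIntegral.integral_eq_sub_of_hasDeriv_right_of_le
          (f := F) (f' := fun _ => (0:ℝ)) (le_of_lt hle) (hF.mono hsub)
          (fun x hx => (hd k x ⟨hx.1, lt_of_lt_of_le hx.2 hs.2⟩).hasDerivWithinAt)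
          (intervalIntegrable_const)
        rw [intervalIntegral.integral_zero] at hint
        have hFk : F (P.t k.castSucc) = 0 :=
          ih (P.t k.castSucc) ⟨P.t_nonneg _, le_rfl⟩
        rw [hFk] at hint
        linarith
  intro s hs
  rw [← P.tL] at hs
  exact key (Fin.last P.n) s hs

/-- The derivative in the `i`-th coordinate is piecewise continuous. -/
lemma PC.pw_deriv (P : PC X L) (i : Fin d) :
    PW P (fun r => deriv (fun u => X u i) r) := by
  intro k
  by_cases hlt : P.t k.castSucc < P.t k.succ
  · have hci : ContDiffOn ℝ 1 (fun u => X u i) (Set.Icc (P.t k.castSucc) (P.t k.succ)) := by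
      have := (ContinuousLinearMap.proj (R := ℝ) (φ := fun _ : Fin d => ℝ) i).contDiff.comp_contDiffOn
        (P.c1 k)
      exact this
    refine ⟨derivWithin (fun u => X u i) (Set.Icc (P.t k.castSucc) (P.t k.succ)),
      hci.continuousOn_derivWithin (uniqueDiffOn_Icc hlt) le_rfl, ?_⟩
    intro x hx
    have hnb : Set.Icc (P.t k.castSucc) (P.t k.succ) ∈ nhds x :=
      Filter.mem_of_superset (isOpen_Ioo.mem_nhds hx) Set.Ioo_subset_Icc_self
    have hdwa : HasDerivWithinAt (fun u => X u i)
        (derivWithin (fun u => X u i) (Set.Icc (P.t k.castSucc) (P.t k.succ)) x)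
        (Set.Icc (P.t k.castSucc) (P.t k.succ)) x :=
      ((hci.differentiableOn one_ne_zero) x (Set.Ioo_subset_Icc_self hx)).hasDerivWithinAt
    exact (hdwa.hasDerivAt hnb).deriv
  · refine ⟨fun _ => 0, continuousOn_const, ?_⟩
    intro x hx
    exact absurd (lt_trans hx.1 hx.2) hlt

end Analysis


section SigAnalysis

open Set

variable {X : ℝ → Fin d → ℝ} {L : ℝ}

lemma shuffleWord_concat_concat' (u v : Word d) (i j : Fin d) :
    shuffleWord (u ++ [i]) (v ++ [j]) =
      appendLetter i (shuffleWord u (v ++ [j])) + appendLetter j (shuffleWord (u ++ [i]) v) :=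
  shuffleWord_concat_concat (u.length + v.length) u v le_rfl i j

/-- Formal pointwise derivative of `sigRev`. -/
def sd (X : ℝ → Fin d → ℝ) : List (Fin d) → ℝ → ℝ
  | [] => fun _ => 0
  | i :: w => fun x => sigRev X w x * deriv (fun u => X u i) x

lemma PC.continuousOn_sigRev (P : PC X L) (w : List (Fin d)) :
    ContinuousOn (fun s => sigRev X w s) (Set.Icc 0 L) := by
  induction w with
  | nil => exact continuousOn_const
  | cons i w ih =>
    exact ((PW.of_continuousOn ih).mul (P.pw_deriv i)).continuousOn_primitive

lemma PC.pw_sigRev (P : PC X L) (w : List (Fin d)) : PW P (fun s => sigRev X w s) :=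
  PW.of_continuousOn (P.continuousOn_sigRev w)

lemma PC.hasDerivAt_sigRev (P : PC X L) (w : List (Fin d)) {k : Fin P.n} {x : ℝ}
    (hx : x ∈ Set.Ioo (P.t k.castSucc) (P.t k.succ)) :
    HasDerivAt (fun s => sigRev X w s) (sd X w x) x := by
  cases w with
  | nil =>
    simpa [sigRev, sd] using hasDerivAt_const x (1 : ℝ)
  | cons i w =>
    exact ((P.pw_sigRev w).mul (P.pw_deriv i)).hasDerivAt_primitive hx

lemma PC.pw_sd (P : PC X L) (w : List (Fin d)) : PW P (sd X w) := by
  cases w with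
  | nil => exact PW.of_continuousOn continuousOn_const
  | cons i w => exact (P.pw_sigRev w).mul (P.pw_deriv i)

lemma PC.continuousOn_sigT (P : PC X L) (z : Tens d) :
    ContinuousOn (fun s => sigT X s z) (Set.Icc 0 L) := by
  have h1 : (fun s => sigT X s z) = fun s => ∑ w ∈ z.support, z w * sigRev X w.reverse s := rfl
  rw [h1]
  exact continuousOn_finset_sum _ fun w _ => continuousOn_const.mul (P.continuousOn_sigRev _)

/-- Formal pointwise derivative of `s ↦ sigT X s z`. -/
def sdT (X : ℝ → Fin d → ℝ) (z : Tens d) (x : ℝ) : ℝ :=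
  z.sum fun w a => a * sd X w.reverse x

lemma PC.hasDerivAt_sigT (P : PC X L) (z : Tens d) {k : Fin P.n} {x : ℝ}
    (hx : x ∈ Set.Ioo (P.t k.castSucc) (P.t k.succ)) :
    HasDerivAt (fun s => sigT X s z) (sdT X z x) x := by
  have h1 : (fun s => sigT X s z) = fun s => ∑ w ∈ z.support, z w * sigRev X w.reverse s := rfl
  rw [h1]
  have h2 : sdT X z x = ∑ w ∈ z.support, z w * sd X w.reverse x := rfl
  rw [h2]
  exact HasDerivAt.fun_sum fun w _ => (P.hasDerivAt_sigRev w.reverse hx).const_mul (z w)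

lemma PC.pw_sdT (P : PC X L) (z : Tens d) : PW P (sdT X z) := by
  have h1 : sdT X z = fun x => ∑ w ∈ z.support, z w * sd X w.reverse x := rfl
  rw [h1]
  exact PW.finset_sum _ _ fun w _ => (P.pw_sd w.reverse).const_mul (z w)

lemma PC.hasDerivAt_sigT_appendLetter (P : PC X L) (Z : Tens d) (i : Fin d) {k : Fin P.n}
    {x : ℝ} (hx : x ∈ Set.Ioo (P.t k.castSucc) (P.t k.succ)) :
    HasDerivAt (fun s => sigT X s (appendLetter i Z))
      (sigT X x Z * deriv (fun u => X u i) x) x := by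
  have h1 : (fun s => sigT X s (appendLetter i Z)) =
      fun s => ∑ w ∈ Z.support, Z w * sigRev X (i :: w.reverse) s := by
    funext s
    rw [sigT_appendLetter]
    rfl
  rw [h1]
  have h2 : sigT X x Z * deriv (fun u => X u i) x =
      ∑ w ∈ Z.support, Z w * (sigRev X w.reverse x * deriv (fun u => X u i) x) := by
    have h3 : sigT X x Z = ∑ w ∈ Z.support, Z w * sigRev X w.reverse x := rfl
    rw [h3, Finset.sum_mul]
    exact Finset.sum_congr rfl fun w _ => by ring
  rw [h2]
  exact HasDerivAt.fun_sum fun w _ =>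
    (P.hasDerivAt_sigRev (i :: w.reverse) hx).const_mul (Z w)

/-- The shuffle identity. -/
lemma PC.sigT_shuffleWord (P : PC X L) :
    ∀ N (u v : Word d), u.length + v.length ≤ N → ∀ s ∈ Set.Icc 0 L,
      sigT X s (shuffleWord u v) = sigWord X s u * sigWord X s v := by
  intro N
  induction N with
  | zero =>
    rintro u v h s hs
    have hu : u = [] := by cases u <;> simp_all
    have hv : v = [] := by cases v <;> simp_all
    subst hu; subst hv
    simp [shuffleWord_nil_left, sigT_single, sigWord, sigRev]
  | succ N ih =>
    rintro u v h s hs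
    rcases List.eq_nil_or_concat u with hu | ⟨u₀, i, hu⟩
    · subst hu
      simp [shuffleWord_nil_left, sigT_single, sigWord, sigRev]
    rcases List.eq_nil_or_concat v with hv | ⟨v₀, j, hv⟩
    · subst hv
      simp [shuffleWord_nil_right, sigT_single, sigWord, sigRev]
    rw [List.concat_eq_append] at hu hv
    subst hu; subst hv
    set F : ℝ → ℝ := fun s => sigT X s (shuffleWord (u₀ ++ [i]) (v₀ ++ [j])) -
      sigRev X (i :: u₀.reverse) s * sigRev X (j :: v₀.reverse) s with hF
    have hF0 : F 0 = 0 := by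
      rw [hF]
      simp only [sigT_zero_time, sigRev_zero]
      rw [shuffleWord_concat_concat']
      simp [appendLetter_apply_nil]
    have hFc : ContinuousOn F (Set.Icc 0 L) :=
      (P.continuousOn_sigT _).sub ((P.continuousOn_sigRev _).mul (P.continuousOn_sigRev _))
    have hFd : ∀ k : Fin P.n, ∀ x ∈ Set.Ioo (P.t k.castSucc) (P.t k.succ),
        HasDerivAt F 0 x := by
      intro k x hx
      have hxI : x ∈ Set.Icc 0 L := P.piece_subset k ⟨le_of_lt hx.1, le_of_lt hx.2⟩
      have hd1 : HasDerivAt (fun s => sigT X s (shuffleWord (u₀ ++ [i]) (v₀ ++ [j])))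
          (sigT X x (shuffleWord u₀ (v₀ ++ [j])) * deriv (fun u => X u i) x +
           sigT X x (shuffleWord (u₀ ++ [i]) v₀) * deriv (fun u => X u j) x) x := by
        have heq : (fun s => sigT X s (shuffleWord (u₀ ++ [i]) (v₀ ++ [j]))) =
            fun s => sigT X s (appendLetter i (shuffleWord u₀ (v₀ ++ [j]))) +
              sigT X s (appendLetter j (shuffleWord (u₀ ++ [i]) v₀)) := by
          funext s
          rw [shuffleWord_concat_concat', sigT_eq_sigL, map_add]
          rfl
        rw [heq]
        exact (P.hasDerivAt_sigT_appendLetter _ i hx).add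
          (P.hasDerivAt_sigT_appendLetter _ j hx)
      have hd2 : HasDerivAt (fun s => sigRev X (i :: u₀.reverse) s *
          sigRev X (j :: v₀.reverse) s)
          (sd X (i :: u₀.reverse) x * sigRev X (j :: v₀.reverse) x +
           sigRev X (i :: u₀.reverse) x * sd X (j :: v₀.reverse) x) x :=
        (P.hasDerivAt_sigRev _ hx).mul (P.hasDerivAt_sigRev _ hx)
      have key := hd1.sub hd2
      have hih1 : sigT X x (shuffleWord u₀ (v₀ ++ [j])) =
          sigWord X x u₀ * sigWord X x (v₀ ++ [j]) := by
        refine ih u₀ (v₀ ++ [j]) ?_ x hxI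
        simp at h ⊢
        omega
      have hih2 : sigT X x (shuffleWord (u₀ ++ [i]) v₀) =
          sigWord X x (u₀ ++ [i]) * sigWord X x v₀ := by
        refine ih (u₀ ++ [i]) v₀ ?_ x hxI
        simp at h ⊢
        omega
      have hval : sigT X x (shuffleWord u₀ (v₀ ++ [j])) * deriv (fun u => X u i) x +
           sigT X x (shuffleWord (u₀ ++ [i]) v₀) * deriv (fun u => X u j) x -
          (sd X (i :: u₀.reverse) x * sigRev X (j :: v₀.reverse) x +
           sigRev X (i :: u₀.reverse) x * sd X (j :: v₀.reverse) x) = 0 := by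
        rw [hih1, hih2, sigWord_concat, sigWord_concat]
        show sigRev X u₀.reverse x * sigRev X (j :: v₀.reverse) x * deriv (fun u => X u i) x +
            sigRev X (i :: u₀.reverse) x * sigRev X v₀.reverse x * deriv (fun u => X u j) x -
          (sigRev X u₀.reverse x * deriv (fun u => X u i) x * sigRev X (j :: v₀.reverse) x +
           sigRev X (i :: u₀.reverse) x * (sigRev X v₀.reverse x * deriv (fun u => X u j) x)) = 0
        ring
      rw [hF]
      rw [← hval]
      exact key
    have := P.eq_zero_of_deriv_zero hFc hF0 hFd s hs
    have this2 : sigT X s (shuffleWord (u₀ ++ [i]) (v₀ ++ [j])) -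
        sigRev X (i :: u₀.reverse) s * sigRev X (j :: v₀.reverse) s = 0 := this
    have h2 : sigWord X s (u₀ ++ [i]) * sigWord X s (v₀ ++ [j]) =
        sigRev X (i :: u₀.reverse) s * sigRev X (j :: v₀.reverse) s := by
      rw [sigWord_concat, sigWord_concat]
    rw [h2]
    linarith

lemma PC.sigT_shuffle_eq (P : PC X L) (u v : Word d) {s : ℝ} (hs : s ∈ Set.Icc 0 L) :
    sigT X s (shuffleWord u v) = sigWord X s u * sigWord X s v :=
  P.sigT_shuffleWord (u.length + v.length) u v le_rfl s hs

end SigAnalysis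


section Main

open Set

variable {X : ℝ → Fin d → ℝ} {L : ℝ}

lemma PC.hasDerivAt_sigT_halfShuffleWord (P : PC X L) (w v : Word d) (hv : v ≠ [])
    {k : Fin P.n} {x : ℝ} (hx : x ∈ Set.Ioo (P.t k.castSucc) (P.t k.succ)) :
    HasDerivAt (fun s => sigT X s (halfShuffleWord w v))
      (sigWord X x w * sd X v.reverse x) x := by
  rcases List.eq_nil_or_concat v with h | ⟨v₀, j, h⟩
  · exact absurd h hv
  rw [List.concat_eq_append] at h
  subst h
  have hxI : x ∈ Set.Icc 0 L := P.piece_subset k ⟨le_of_lt hx.1, le_of_lt hx.2⟩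
  have h1 := P.hasDerivAt_sigT_appendLetter (shuffleWord w v₀) j hx
  have h2 : sigT X x (shuffleWord w v₀) = sigWord X x w * sigWord X x v₀ :=
    P.sigT_shuffle_eq w v₀ hxI
  have h4 : sigWord X x w * sd X (v₀ ++ [j]).reverse x =
      sigT X x (shuffleWord w v₀) * deriv (fun u => X u j) x := by
    have hrev : (v₀ ++ [j]).reverse = j :: v₀.reverse := by simp
    rw [hrev, h2]
    show sigWord X x w * (sigRev X v₀.reverse x * deriv (fun u => X u j) x) = _
    have : sigWord X x v₀ = sigRev X v₀.reverse x := rfl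
    rw [this]
    ring
  rw [halfShuffleWord_concat, h4]
  exact h1

lemma PC.hasDerivAt_sigT_halfShuffle (P : PC X L) (z y : Tens d) (hy : y ([] : Word d) = 0)
    {k : Fin P.n} {x : ℝ} (hx : x ∈ Set.Ioo (P.t k.castSucc) (P.t k.succ)) :
    HasDerivAt (fun s => sigT X s (halfShuffle z y)) (sigT X x z * sdT X y x) x := by
  have hfun : (fun s => sigT X s (halfShuffle z y)) =
      fun s => ∑ w ∈ z.support, ∑ v ∈ y.support,
        (z w * y v) * sigT X s (halfShuffleWord w v) := by
    funext s
    rw [sigT_eq_sigL]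
    unfold halfShuffle
    rw [map_finsuppSum, Finsupp.sum]
    refine Finset.sum_congr rfl fun w _ => ?_
    rw [map_finsuppSum, Finsupp.sum]
    refine Finset.sum_congr rfl fun v _ => ?_
    rw [_root_.map_smul, smul_eq_mul, ← sigT_eq_sigL]
  have hval : sigT X x z * sdT X y x =
      ∑ w ∈ z.support, ∑ v ∈ y.support,
        (z w * y v) * (sigWord X x w * sd X v.reverse x) := by
    have h1 : sigT X x z = ∑ w ∈ z.support, z w * sigWord X x w := rfl
    have h2 : sdT X y x = ∑ v ∈ y.support, y v * sd X v.reverse x := rfl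
    rw [h1, h2, Finset.sum_mul_sum]
    exact Finset.sum_congr rfl fun w _ => Finset.sum_congr rfl fun v _ => by ring
  rw [hfun, hval]
  refine HasDerivAt.fun_sum fun w _ => HasDerivAt.fun_sum fun v hv => ?_
  have hvne : v ≠ [] := by
    intro h
    subst h
    exact (Finsupp.mem_support_iff.mp hv) hy
  exact (P.hasDerivAt_sigT_halfShuffleWord w v hvne hx).const_mul (z w * y v)

/-- The main induction: the signature of the transformed path is a linear image of the
signature of `X`. -/
lemma PC.main {m : ℕ} (P : PC X L) (B : Fin m → Tens d) (hB : ∀ i, B i ([] : Word d) = 0)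
    (Lam : Tens m →ₗ[ℝ] Tens d)
    (hLamLetter : ∀ i : Fin m, Lam (wordT [i]) = B i)
    (hLamHom : ∀ x y : Tens m, x ([] : Word m) = 0 → y ([] : Word m) = 0 →
      Lam (halfShuffle x y) = halfShuffle (Lam x) (Lam y)) :
    ∀ u : List (Fin m), u ≠ [] → ∀ s ∈ Set.Icc 0 L,
      sigRev (fun r j => sigT X r (B j)) u s = sigT X s (Lam (wordT u.reverse)) := by
  have hderivY : ∀ (i : Fin m) (k : Fin P.n), ∀ x ∈ Set.Ioo (P.t k.castSucc) (P.t k.succ),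
      deriv (fun r => sigT X r (B i)) x = sdT X (B i) x :=
    fun i k x hx => (P.hasDerivAt_sigT (B i) hx).deriv
  have pwDY : ∀ i : Fin m, PW P (fun r => deriv (fun w => sigT X w (B i)) r) :=
    fun i => (P.pw_sdT (B i)).congr (fun k x hx => hderivY i k x hx)
  intro u
  induction u with
  | nil => exact fun hu => absurd rfl hu
  | cons i u ih =>
    intro _
    by_cases hu : u = []
    · subst hu
      have hrev : Lam (wordT ((i :: ([] : List (Fin m))).reverse)) = B i := by
        simp only [List.reverse_cons, List.reverse_nil, List.nil_append]
        exact hLamLetter i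
      have pw1 : PW P (fun r => sigRev (fun r j => sigT X r (B j)) ([] : List (Fin m)) r) :=
        PW.of_continuousOn (by
          show ContinuousOn (fun _ : ℝ => (1 : ℝ)) (Set.Icc 0 L)
          exact continuousOn_const)
      have pwg := pw1.mul (pwDY i)
      have hFc : ContinuousOn (fun s => sigRev (fun r j => sigT X r (B j)) [i] s -
          sigT X s (B i)) (Set.Icc 0 L) :=
        (pwg.continuousOn_primitive).sub (P.continuousOn_sigT (B i))
      have hF0 : sigRev (fun r j => sigT X r (B j)) [i] 0 - sigT X 0 (B i) = 0 := by
        rw [sigRev_zero, sigT_zero_time, hB i]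
        simp
      have hFd : ∀ k : Fin P.n, ∀ x ∈ Set.Ioo (P.t k.castSucc) (P.t k.succ),
          HasDerivAt (fun s => sigRev (fun r j => sigT X r (B j)) [i] s -
            sigT X s (B i)) 0 x := by
        intro k x hx
        have h1 : HasDerivAt (fun s => sigRev (fun r j => sigT X r (B j)) [i] s)
            (sigRev (fun r j => sigT X r (B j)) [] x *
              deriv (fun w => sigT X w (B i)) x) x :=
          pwg.hasDerivAt_primitive hx
        have hval : sigRev (fun r j => sigT X r (B j)) [] x *
            deriv (fun w => sigT X w (B i)) x = sdT X (B i) x := by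
          rw [hderivY i k x hx]
          show 1 * sdT X (B i) x = sdT X (B i) x
          ring
        rw [hval] at h1
        have h12 := h1.sub (P.hasDerivAt_sigT (B i) hx)
        rwa [sub_self] at h12
      intro s hs
      have hz : sigRev (fun r j => sigT X r (B j)) [i] s - sigT X s (B i) = 0 :=
        P.eq_zero_of_deriv_zero hFc hF0 hFd s hs
      rw [hrev]
      linarith
    · have ihs := ih hu
      set Z : Tens d := Lam (wordT u.reverse) with hZ
      have hw : Lam (wordT ((i :: u).reverse)) = halfShuffle Z (B i) := by
        have h1 : (i :: u).reverse = u.reverse ++ [i] := by simp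
        have h2 : wordT (u.reverse ++ [i]) =
            halfShuffle (wordT u.reverse) (wordT [i]) := by
          show Finsupp.single (u.reverse ++ [i]) 1 =
            halfShuffle (Finsupp.single u.reverse 1) (Finsupp.single [i] 1)
          rw [halfShuffle_single_single]
          have h3 := halfShuffleWord_concat u.reverse [] i
          simp only [List.nil_append] at h3
          rw [h3, shuffleWord_nil_right, appendLetter_single]
        have hx1 : wordT u.reverse ([] : Word m) = 0 := by
          have : u.reverse ≠ [] := by
            simpa using hu
          exact Finsupp.single_eq_of_ne' this
        have hx2 : wordT [i] ([] : Word m) = 0 :=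
          Finsupp.single_eq_of_ne (by simp)
        rw [h1, h2, hLamHom _ _ hx1 hx2, hLamLetter]
      have pwU : PW P (fun r => sigRev (fun r j => sigT X r (B j)) u r) :=
        (PW.of_continuousOn (P.continuousOn_sigT Z)).congr
          (fun k x hx => ihs x (P.piece_subset k ⟨le_of_lt hx.1, le_of_lt hx.2⟩))
      have pwg := pwU.mul (pwDY i)
      have hFc : ContinuousOn (fun s => sigRev (fun r j => sigT X r (B j)) (i :: u) s -
          sigT X s (halfShuffle Z (B i))) (Set.Icc 0 L) :=
        (pwg.continuousOn_primitive).sub (P.continuousOn_sigT _)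
      have hF0 : sigRev (fun r j => sigT X r (B j)) (i :: u) 0 -
          sigT X 0 (halfShuffle Z (B i)) = 0 := by
        rw [sigRev_zero, sigT_zero_time, halfShuffle_apply_nil]
        simp
      have hFd : ∀ k : Fin P.n, ∀ x ∈ Set.Ioo (P.t k.castSucc) (P.t k.succ),
          HasDerivAt (fun s => sigRev (fun r j => sigT X r (B j)) (i :: u) s -
            sigT X s (halfShuffle Z (B i))) 0 x := by
        intro k x hx
        have hxI : x ∈ Set.Icc 0 L := P.piece_subset k ⟨le_of_lt hx.1, le_of_lt hx.2⟩
        have h1 : HasDerivAt (fun s => sigRev (fun r j => sigT X r (B j)) (i :: u) s)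
            (sigRev (fun r j => sigT X r (B j)) u x *
              deriv (fun w => sigT X w (B i)) x) x :=
          pwg.hasDerivAt_primitive hx
        have hval : sigRev (fun r j => sigT X r (B j)) u x *
            deriv (fun w => sigT X w (B i)) x = sigT X x Z * sdT X (B i) x := by
          rw [ihs x hxI, hderivY i k x hx]
        rw [hval] at h1
        have h12 := h1.sub (P.hasDerivAt_sigT_halfShuffle Z (B i) (hB i) hx)
        rwa [sub_self] at h12
      intro s hs
      have hz : sigRev (fun r j => sigT X r (B j)) (i :: u) s -
          sigT X s (halfShuffle Z (B i)) = 0 :=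
        P.eq_zero_of_deriv_zero hFc hF0 hFd s hs
      rw [hw]
      linarith

end Main

/-- For a piecewise continuously differentiable path `X : [0,L] → ℝ^d` and
a linear map `B : ℝ^m → T^{≥1}(ℝ^d)` (given by its values `B i` on the standard basis),
the path `Y_t^i := ⟨σ(X|_{[0,t]}), B(e_i)⟩` satisfies
`⟨σ(Y), w⟩ = ⟨σ(X), Λ_B(w)⟩` for all `w ∈ T^{≥1}(ℝ^m)`, where `Λ_B` is the unique
Zinbiel-homomorphism extension of `B`. -/
theorem signature_zinbiel_transform (d m : ℕ) (L : ℝ)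
    (X : ℝ → Fin d → ℝ) (hX : PiecewiseC1 X L)
    (B : Fin m → Tens d) (hB : ∀ i, B i ([] : Word d) = 0)
    (Lam : Tens m →ₗ[ℝ] Tens d)
    (hLamLetter : ∀ i : Fin m, Lam (wordT [i]) = B i)
    (hLamHom : ∀ x y : Tens m, x ([] : Word m) = 0 → y ([] : Word m) = 0 →
      Lam (halfShuffle x y) = halfShuffle (Lam x) (Lam y)) :
    ∀ x : Tens m, x ([] : Word m) = 0 →
      sigT (fun t i => sigT X t (B i)) L x = sigT X L (Lam x) := by
  intro x hx
  obtain ⟨n, t, hmono, ht0, htL, hc1⟩ := hX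
  let P : PC X L := ⟨n, t, hmono, ht0, htL, hc1⟩
  have main := P.main B hB Lam hLamLetter hLamHom
  have hC : ∀ w ∈ x.support, x w * sigWord (fun t i => sigT X t (B i)) L w =
      x w * sigT X L (Lam (wordT w)) := by
    intro w hw
    have hwne : w ≠ [] := by
      intro h
      subst h
      exact (Finsupp.mem_support_iff.mp hw) hx
    have hm := main w.reverse (by simpa using hwne) L ⟨P.L_nonneg, le_rfl⟩
    rw [List.reverse_reverse] at hm
    show x w * sigRev (fun r j => sigT X r (B j)) w.reverse L = _
    rw [hm]
  show (∑ w ∈ x.support, x w * sigWord (fun t i => sigT X t (B i)) L w) = sigT X L (Lam x)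
  rw [Finset.sum_congr rfl hC]
  have hrep : ∑ w ∈ x.support, x w * sigT X L (Lam (wordT w)) =
      sigL X L (Lam (x.sum fun w a => Finsupp.single w a)) := by
    rw [map_finsuppSum, map_finsuppSum, Finsupp.sum]
    refine Finset.sum_congr rfl fun w _ => ?_
    have h1 : Finsupp.single w (x w) = (x w) • wordT w := by
      unfold wordT
      rw [Finsupp.smul_single, smul_eq_mul, mul_one]
    rw [h1, _root_.map_smul, _root_.map_smul, smul_eq_mul, ← sigT_eq_sigL]
  rw [hrep, Finsupp.sum_single, ← sigT_eq_sigL]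

end SigPaper
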